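/- Let Ω be a nonempty compact subset of ℝ^n, let L_0, …, L_m : ℝ^n → ℝ be continuous, let a ∈ ℝ^{m+1} satisfy a_i < L_i(x) for all x ∈ Ω and all i, and let k ∈ ℝ^{m+1} satisfy k_i ≥ 0 for all i and Σ_{i=0}^m k_i = 1. Then there exists x* ∈ Ω that minimizes the weighted Chebyshev objective φ_k(x) = max_{0≤i≤m} k_i (L_i(x) − a_i) over Ω and is Pareto optimal; in particular, the weighted Chebyshev scalarization problem has at least one Pareto optimal solution. -/
import Mathlib


/-- On a nonempty compact `Ω ⊆ ℝ^n` with continuous objectives,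
the weighted Chebyshev scalarization problem has a minimizer that is Pareto
optimal; in particular it has at least one Pareto optimal solution. -/
theorem weightedChebyshev_exists_paretoOptimal_minimizer
    (n m : ℕ) (Ω : Set (Fin n → ℝ))
    (L : Fin (m + 1) → (Fin n → ℝ) → ℝ)
    (a k : Fin (m + 1) → ℝ)
    (hΩ : Ω.Nonempty) (hΩc : IsCompact Ω)
    (hL : ∀ i, Continuous (L i))
    (ha : ∀ x ∈ Ω, ∀ i, a i < L i x)
    (hk : ∀ i, 0 ≤ k i) (hksum : ∑ i, k i = 1) :
    ∃ xstar ∈ Ω,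
      (∀ x ∈ Ω,
        Finset.univ.sup' Finset.univ_nonempty (fun i => k i * (L i xstar - a i)) ≤
          Finset.univ.sup' Finset.univ_nonempty (fun i => k i * (L i x - a i))) ∧
      ¬ ∃ x' ∈ Ω, (∀ i, L i x' ≤ L i xstar) ∧ ∃ j, L j x' < L j xstar := by
  set φ : (Fin n → ℝ) → ℝ :=
    fun x => Finset.univ.sup' Finset.univ_nonempty (fun i => k i * (L i x - a i)) with hφ
  have hφc : Continuous φ :=
    Continuous.finset_sup'_apply (f := fun i x => k i * (L i x - a i)) Finset.univ_nonempty
      (fun i _ => continuous_const.mul ((hL i).sub continuous_const))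
  obtain ⟨x0, hx0Ω, hx0min⟩ := hΩc.exists_isMinOn hΩ hφc.continuousOn
  set M : Set (Fin n → ℝ) := Ω ∩ φ ⁻¹' Set.Iic (φ x0) with hM
  have hMc : IsCompact M :=
    hΩc.inter_right (IsClosed.preimage hφc isClosed_Iic)
  have hx0M : x0 ∈ M := ⟨hx0Ω, by simp [Set.mem_preimage]⟩
  set g : (Fin n → ℝ) → ℝ := fun x => ∑ i, L i x with hg
  have hgc : Continuous g := continuous_finset_sum _ fun i _ => hL i
  obtain ⟨xs, hxsM, hxsmin⟩ := hMc.exists_isMinOn ⟨x0, hx0M⟩ hgc.continuousOn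
  obtain ⟨hxsΩ, hxsle⟩ := hxsM
  refine ⟨xs, hxsΩ, ?_, ?_⟩
  · intro x hx
    exact le_trans hxsle (hx0min hx)
  · rintro ⟨x', hx'Ω, hle, j, hj⟩
    have hφle : φ x' ≤ φ xs := by
      apply Finset.sup'_le
      intro i _
      have : k i * (L i x' - a i) ≤ k i * (L i xs - a i) :=
        mul_le_mul_of_nonneg_left (by linarith [hle i]) (hk i)
      exact le_trans this (Finset.le_sup' (fun i => k i * (L i xs - a i)) (Finset.mem_univ i))
    have hx'M : x' ∈ M := ⟨hx'Ω, le_trans hφle hxsle⟩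
    have hglt : g x' < g xs := by
      apply Finset.sum_lt_sum (fun i _ => hle i) ⟨j, Finset.mem_univ j, hj⟩
    exact absurd (hxsmin hx'M) (not_le.mpr hglt)
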